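/- arXiv:2106.00215 — 2 statements merged into one kernel-verified Lean document; each statement's English description precedes it below -/
import Mathlib

section
/- For every ε > 0, the system of equations ε = x² − y² and −εx = 4xy² has no real solution (x, y). Equivalently, the vector field f(x,y) = (x² − y², 4xy²) never equals the adversary vector field X_ε(x,y) = (ε, −εx) at any point. -/
/-- For every `ε > 0`, the system `ε = x² − y²`, `−εx = 4xy²` has no real solution:
the vector field `f(x,y) = (x² − y², 4xy²)` never equals the adversary
`X_ε(x,y) = (ε, −εx)`. -/
theorem no_solution_adversary :
    ∀ ε : ℝ, 0 < ε → ¬ ∃ x y : ℝ, ε = x ^ 2 - y ^ 2 ∧ -ε * x = 4 * x * y ^ 2 := by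
  rintro ε hε ⟨x, y, h1, h2⟩
  have hx : x = 0 := by
    by_contra hx
    have : -ε = 4 * y ^ 2 := by
      field_simp at h2
      rcases mul_eq_mul_right_iff.mp (by linear_combination x * h2 : (-ε) * x = (4 * y ^ 2) * x) with h | h
      · exact h
      · exact absurd h hx
    nlinarith [sq_nonneg y]
  subst hx
  nlinarith [sq_nonneg y]
end

section
/- Let M be a smooth manifold, F a continuous vector field on M generating a continuous (semi)flow Φ, and suppose S ⊆ M is precompact and strictly positively invariant: for all x₀ ∈ cl(S) and all t > 0, Φ^t(x₀) ∈ int(S). Then S is homotopy equivalent to its interior int(S); specifically, the time-1 map Φ¹|_S : S → int(S) is a homotopy inverse of the inclusion int(S) ↪ S. -/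
/-- Let `Φ` be a continuous semiflow on a space `M` and let `S ⊆ M` be precompact
and strictly positively invariant: `Φ t x ∈ int S` for all `x ∈ cl S` and `t > 0`.
Then `S` is homotopy equivalent to `int S`; specifically the time-1 map `Φ¹|_S`
is a homotopy inverse of the inclusion `int S ↪ S`. -/
theorem strictly_invariant_homotopy_equiv_interior
    {M : Type*} [TopologicalSpace M]
    (Φ : ℝ → M → M)
    (hΦcont : Continuous fun p : ℝ × M => Φ p.1 p.2)
    (hΦ0 : ∀ x : M, Φ 0 x = x)
    (hΦadd : ∀ t s : ℝ, 0 ≤ t → 0 ≤ s → ∀ x : M, Φ (t + s) x = Φ t (Φ s x))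
    (S : Set M) (hS : IsCompact (closure S))
    (hinv : ∀ x ∈ closure S, ∀ t : ℝ, 0 < t → Φ t x ∈ interior S) :
    ∃ h : ContinuousMap.HomotopyEquiv S (interior S),
      (∀ x : S, ((h.toFun x : interior S) : M) = Φ 1 (x : M)) ∧
      (∀ y : interior S, ((h.invFun y : S) : M) = (y : M)) := by
  -- membership lemmas
  have hmemS : ∀ t : ℝ, 0 ≤ t → ∀ x ∈ S, Φ t x ∈ S := by
    intro t ht x hx
    rcases ht.eq_or_lt with h | h
    · rw [← h, hΦ0]; exact hx
    · exact interior_subset (hinv x (subset_closure hx) t h)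
  have hmemI : ∀ t : ℝ, 0 ≤ t → ∀ x ∈ interior S, Φ t x ∈ interior S := by
    intro t ht x hx
    rcases ht.eq_or_lt with h | h
    · rw [← h, hΦ0]; exact hx
    · exact hinv x (subset_closure (interior_subset hx)) t h
  -- forward map
  let f : C(S, interior S) :=
    ⟨fun x => ⟨Φ 1 (x : M), hinv x (subset_closure x.2) 1 one_pos⟩,
      by
        apply Continuous.subtype_mk
        exact (hΦcont.comp (continuous_const.prodMk continuous_subtype_val))⟩
  -- backward map: inclusion
  let g : C(interior S, S) := ⟨fun y => ⟨(y : M), interior_subset y.2⟩,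
      (continuous_subtype_val).subtype_mk _⟩
  have hc1t : Continuous fun p : unitInterval × M => Φ (1 - (p.1 : ℝ)) p.2 :=
    hΦcont.comp ((continuous_const.sub (continuous_subtype_val.comp continuous_fst)).prodMk
      continuous_snd)
  have hHS : (g.comp f).Homotopic (ContinuousMap.id S) := by
    refine ⟨⟨⟨fun p => ⟨Φ (1 - (p.1 : ℝ)) (p.2 : M),
        hmemS _ (by have := p.1.2.2; linarith) _ p.2.2⟩, ?_⟩, ?_, ?_⟩⟩
    · exact (hc1t.comp ((continuous_id.prodMap continuous_subtype_val))).subtype_mk _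
    · intro x; ext; simp [f, g]
    · intro x; ext; simp [hΦ0]
  have hHI : (f.comp g).Homotopic (ContinuousMap.id (interior S)) := by
    refine ⟨⟨⟨fun p => ⟨Φ (1 - (p.1 : ℝ)) (p.2 : M),
        hmemI _ (by have := p.1.2.2; linarith) _ p.2.2⟩, ?_⟩, ?_, ?_⟩⟩
    · exact (hc1t.comp ((continuous_id.prodMap continuous_subtype_val))).subtype_mk _
    · intro x; ext; simp [f, g]
    · intro x; ext; simp [hΦ0]
  exact ⟨⟨f, g, hHS, hHI⟩, fun x => rfl, fun y => rfl⟩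
end
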